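/- arXiv:2307.16065 — 3 statements merged into one kernel-verified Lean document; each statement's English description precedes it below -/
import Mathlib

section
/- Let a > 0, C > 0, and let g : ℝ → ℂ be a measurable function such that g(λ) = 0 for all λ < 0 and |g(λ)| ≤ C·e^{−aλ} for all λ ≥ 0. If ∫_ℝ λ^m · g(λ) dλ = 0 for every natural number m, then g = 0 almost everywhere on ℝ. -/
open MeasureTheory Complex
open Set Filter Asymptotics

lemma aux_intOn {a : ℝ} (ha : 0 < a) (n : ℕ) :
    IntegrableOn (fun x : ℝ => x ^ n * Real.exp (-(a * x))) (Set.Ioi 0) := by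
  apply integrable_of_isBigO_exp_neg (half_pos ha)
    (Continuous.continuousOn (by continuity))
  have h0 : Tendsto (fun x : ℝ => x ^ n * Real.exp (-((a/2) * x))) atTop (nhds 0) := by
    have h1 : Tendsto (fun x : ℝ => (a/2) * x) atTop atTop :=
      Tendsto.const_mul_atTop (half_pos ha) tendsto_id
    have h2 := (Real.tendsto_pow_mul_exp_neg_atTop_nhds_zero n).comp h1
    have h3 : Tendsto (fun x : ℝ => (1/(a/2))^n * (((a/2)*x) ^ n * Real.exp (-((a/2)*x))))
        atTop (nhds ((1/(a/2))^n * 0)) := h2.const_mul _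
    rw [mul_zero] at h3
    refine h3.congr fun x => ?_
    rw [← mul_assoc, ← mul_pow]
    congr 2
    field_simp
  have heq : (fun x : ℝ => x ^ n * Real.exp (-(a * x)))
      = fun x => (x ^ n * Real.exp (-((a/2) * x))) * Real.exp (-(a/2) * x) := by
    funext x
    rw [mul_assoc, ← Real.exp_add]
    ring_nf
  rw [heq]
  simpa using (h0.isBigO_one ℝ).mul (isBigO_refl (fun x : ℝ => Real.exp (-(a/2) * x)) atTop)

lemma aux_int_val {a : ℝ} (ha : 0 < a) (n : ℕ) :
    ∫ x in Set.Ioi (0:ℝ), x ^ n * Real.exp (-(a * x)) = (Nat.factorial n : ℝ) / a ^ (n + 1) := by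
  have h := Real.integral_rpow_mul_exp_neg_mul_Ioi (a := (n + 1 : ℝ)) (r := a) (by positivity) ha
  rw [show ((n : ℝ) + 1) - 1 = (n : ℝ) by ring] at h
  rw [Real.Gamma_nat_eq_factorial] at h
  rw [show ((n:ℝ) + 1) = ((n + 1 : ℕ) : ℝ) by push_cast; ring, Real.rpow_natCast] at h
  rw [show (Nat.factorial n : ℝ) / a ^ (n+1) = (1/a) ^ (n+1) * (Nat.factorial n : ℝ) by
    rw [div_pow, one_pow]; ring]
  rw [← h]
  refine setIntegral_congr_fun measurableSet_Ioi fun t ht => ?_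
  rw [Real.rpow_natCast]

lemma aux_fact_le (m k : ℕ) :
    ((Nat.factorial (m + k)) : ℝ) ≤ (Nat.factorial m : ℝ) * Nat.factorial k * 2 ^ (m + k) := by
  have h1 : (m + k).choose k * Nat.factorial k * Nat.factorial m = Nat.factorial (m + k) := by
    have := Nat.choose_mul_factorial_mul_factorial (Nat.le_add_left k m)
    simpa [Nat.add_sub_cancel] using this
  have h2 : (m + k).choose k ≤ 2 ^ (m + k) := by
    calc (m + k).choose k ≤ ∑ i ∈ Finset.range (m + k + 1), (m + k).choose i :=
          Finset.single_le_sum (fun i _ => Nat.zero_le _)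
            (Finset.mem_range.2 (by omega))
      _ = 2 ^ (m + k) := Nat.sum_range_choose (m + k)
  have h3 : Nat.factorial (m + k) ≤ Nat.factorial m * Nat.factorial k * 2 ^ (m + k) := by
    calc Nat.factorial (m + k) = (m + k).choose k * Nat.factorial k * Nat.factorial m := h1.symm
      _ ≤ 2 ^ (m + k) * Nat.factorial k * Nat.factorial m :=
          Nat.mul_le_mul_right _ (Nat.mul_le_mul_right _ h2)
      _ = Nat.factorial m * Nat.factorial k * 2 ^ (m + k) := by ring
  exact_mod_cast h3

set_option maxHeartbeats 1000000 in
/-- Moment uniqueness: if all moments of an exponentially decaying measurable function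
supported on `[0,∞)` vanish, then the function vanishes almost everywhere. -/
theorem eq_zero_ae_of_moments_vanish
    (a C : ℝ) (ha : 0 < a) (hC : 0 < C) (g : ℝ → ℂ)
    (hg_meas : Measurable g)
    (hg_supp : ∀ l : ℝ, l < 0 → g l = 0)
    (hg_bound : ∀ l : ℝ, 0 ≤ l → ‖g l‖ ≤ C * Real.exp (-a * l))
    (hmom : ∀ m : ℕ, ∫ l : ℝ, (l : ℂ) ^ m * g l = 0) :
    g =ᵐ[volume] 0 := by
  -- measurability of the basic integrands
  have hmeas : ∀ (s : ℝ) (m : ℕ), AEStronglyMeasurable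
      (fun l : ℝ => (l:ℂ)^m * g l * (Real.exp (-(s*l)) : ℂ)) volume := by
    intro s m
    apply Measurable.aestronglyMeasurable
    exact ((Complex.measurable_ofReal.pow_const m).mul hg_meas).mul
      (Complex.measurable_ofReal.comp (Real.measurable_exp.comp
        ((measurable_const.mul measurable_id).neg)))
  -- the majorant
  have hB : ∀ m : ℕ, Integrable
      (Set.indicator (Set.Ici 0) (fun x : ℝ => C * (x^m * Real.exp (-(a*x))))) volume := by
    intro m
    rw [integrable_indicator_iff measurableSet_Ici]
    rw [integrableOn_Ici_iff_integrableOn_Ioi]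
    exact (aux_intOn ha m).const_mul C
  have hbound : ∀ (s:ℝ), 0 ≤ s → ∀ (m : ℕ) (l : ℝ),
      ‖(l:ℂ)^m * g l * (Real.exp (-(s*l)) : ℂ)‖ ≤
      Set.indicator (Set.Ici 0) (fun x : ℝ => C * (x^m * Real.exp (-(a*x)))) l := by
    intro s hs m l
    rcases lt_or_ge l 0 with hl | hl
    · simp [hg_supp l hl, Set.indicator_of_notMem (Set.notMem_Ici.2 hl)]
    · rw [Set.indicator_of_mem (show l ∈ Set.Ici (0:ℝ) from hl)]
      have h1 : ‖(l:ℂ)^m * g l * (Real.exp (-(s*l)):ℂ)‖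
          = l^m * ‖g l‖ * Real.exp (-(s*l)) := by
        rw [norm_mul, norm_mul, norm_pow, Complex.norm_real, Complex.norm_real,
          Real.norm_eq_abs, Real.norm_eq_abs, _root_.abs_of_nonneg hl, Real.abs_exp]
      rw [h1]
      have h2 : Real.exp (-(s*l)) ≤ 1 := Real.exp_le_one_iff.2 (by nlinarith)
      have h3 : ‖g l‖ ≤ C * Real.exp (-(a*l)) := by simpa [neg_mul] using hg_bound l hl
      calc l^m * ‖g l‖ * Real.exp (-(s*l)) ≤ l^m * (C * Real.exp (-(a*l))) * 1 := by
            apply mul_le_mul (mul_le_mul le_rfl h3 (norm_nonneg _) (by positivity)) h2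
              (Real.exp_pos _).le (by positivity)
        _ = C * (l^m * Real.exp (-(a*l))) := by ring
  have hInt : ∀ (s:ℝ), 0 ≤ s → ∀ m : ℕ, Integrable
      (fun l : ℝ => (l:ℂ)^m * g l * (Real.exp (-(s*l)) : ℂ)) volume :=
    fun s hs m => (hB m).mono' (hmeas s m) (ae_of_all _ (hbound s hs m))
  have hIntNorm : ∀ (s:ℝ), 0 ≤ s → ∀ m : ℕ,
      ∫ l : ℝ, ‖(l:ℂ)^m * g l * (Real.exp (-(s*l)):ℂ)‖ ≤
        C * (Nat.factorial m) / a^(m+1) := by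
    intro s hs m
    have h1 : ∫ l : ℝ, ‖(l:ℂ)^m * g l * (Real.exp (-(s*l)):ℂ)‖ ≤
        ∫ l, Set.indicator (Set.Ici 0) (fun x : ℝ => C * (x^m * Real.exp (-(a*x)))) l :=
      integral_mono (hInt s hs m).norm (hB m) (hbound s hs m)
    have h2 : ∫ l : ℝ, Set.indicator (Set.Ici 0)
        (fun x : ℝ => C * (x^m * Real.exp (-(a*x)))) l = C * (Nat.factorial m) / a^(m+1) := by
      rw [integral_indicator measurableSet_Ici, integral_Ici_eq_integral_Ioi,
        integral_const_mul, aux_int_val ha m]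
      ring
    linarith
  -- key step: translate the vanishing of all "shifted moments" by η ≤ a/4
  have step : ∀ (s:ℝ), 0 ≤ s →
      (∀ m : ℕ, ∫ l : ℝ, (l:ℂ)^m * g l * (Real.exp (-(s*l)):ℂ) = 0) →
      ∀ (η:ℝ), 0 ≤ η → η ≤ a/4 →
      ∀ m : ℕ, ∫ l : ℝ, (l:ℂ)^m * g l * (Real.exp (-((s+η)*l)):ℂ) = 0 := by
    intro s hs hzero η hη hη4 m
    set F : ℕ → ℝ → ℂ := fun k l =>
      (((-η)^k / Nat.factorial k : ℝ) : ℂ) * ((l:ℂ)^(m+k) * g l * (Real.exp (-(s*l)):ℂ))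
      with hF
    have hFint : ∀ k, Integrable (F k) volume := fun k => (hInt s hs (m+k)).const_mul _
    have hFzero : ∀ k, ∫ l : ℝ, F k l = 0 := by
      intro k
      rw [hF]
      simp only []
      rw [integral_const_mul, hzero (m+k), mul_zero]
    have hFnorm : ∀ k, ∫ l : ℝ, ‖F k l‖ ≤
        (C * Nat.factorial (m+k) / a^(m+k+1)) * (η^k / Nat.factorial k) := by
      intro k
      have e : ∀ l : ℝ, ‖F k l‖ =
          (η^k / Nat.factorial k) * ‖(l:ℂ)^(m+k) * g l * (Real.exp (-(s*l)):ℂ)‖ := by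
        intro l
        rw [hF]
        simp only []
        rw [norm_mul, Complex.norm_real, Real.norm_eq_abs, abs_div, _root_.abs_pow, _root_.abs_neg,
          _root_.abs_of_nonneg hη, Nat.abs_cast]
      calc ∫ l : ℝ, ‖F k l‖
          = ∫ l : ℝ, (η^k / Nat.factorial k) *
            ‖(l:ℂ)^(m+k) * g l * (Real.exp (-(s*l)):ℂ)‖ :=
            integral_congr_ae (ae_of_all _ e)
        _ = (η^k / Nat.factorial k) *
            ∫ l : ℝ, ‖(l:ℂ)^(m+k) * g l * (Real.exp (-(s*l)):ℂ)‖ := integral_const_mul _ _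
        _ ≤ (η^k / Nat.factorial k) * (C * Nat.factorial (m+k) / a^(m+k+1)) := by
            apply mul_le_mul_of_nonneg_left (hIntNorm s hs (m+k)) (by positivity)
        _ = (C * Nat.factorial (m+k) / a^(m+k+1)) * (η^k / Nat.factorial k) := by ring
    have hmaj : ∀ k : ℕ, (C * Nat.factorial (m+k) / a^(m+k+1)) * (η^k / Nat.factorial k)
        ≤ (C * Nat.factorial m * 2^m / a^(m+1)) * (2*η/a)^k := by
      intro k
      have hfact := aux_fact_le m k
      calc (C * Nat.factorial (m+k) / a^(m+k+1)) * (η^k / Nat.factorial k)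
          = C * η^k * ((Nat.factorial (m+k) : ℝ)) / ((Nat.factorial k : ℝ) * a^(m+k+1)) := by
            ring
        _ ≤ C * η^k * ((Nat.factorial m : ℝ) * Nat.factorial k * 2^(m+k)) /
            ((Nat.factorial k : ℝ) * a^(m+k+1)) := by gcongr
        _ = (C * Nat.factorial m * 2^m / a^(m+1)) * (2*η/a)^k := by
            rw [show m+k+1 = (m+1)+k by ring, pow_add, pow_add, div_pow, mul_pow]
            have hk : (Nat.factorial k : ℝ) ≠ 0 := by positivity
            field_simp
    have hsum : Summable (fun k => ∫ l : ℝ, ‖F k l‖) := by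
      apply Summable.of_nonneg_of_le (fun k => integral_nonneg fun l => norm_nonneg _)
        (fun k => le_trans (hFnorm k) (hmaj k))
      apply Summable.mul_left
      apply summable_geometric_of_lt_one (by positivity)
      rw [div_lt_one ha]
      linarith
    have h0 := integral_tsum_of_summable_integral_norm hFint hsum
    have h1 : ∀ l : ℝ, (∑' k, F k l) = (l:ℂ)^m * g l * (Real.exp (-((s+η)*l)):ℂ) := by
      intro l
      have e1 : ∀ k, F k l = ((-(η:ℂ) * l)^k / (Nat.factorial k : ℂ)) *
          ((l:ℂ)^m * g l * (Real.exp (-(s*l)):ℂ)) := by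
        intro k
        rw [hF]
        simp only []
        push_cast
        ring
      rw [tsum_congr e1, tsum_mul_right]
      have e2 : (∑' k : ℕ, (-(η:ℂ)*l)^k / (Nat.factorial k : ℂ)) = Complex.exp (-(η:ℂ)*l) := by
        rw [Complex.exp_eq_exp_ℂ, NormedSpace.exp_eq_tsum_div]
      rw [e2]
      have e3 : ((Real.exp (-((s+η)*l)) : ℝ) : ℂ)
          = Complex.exp (-(η:ℂ)*l) * ((Real.exp (-(s*l)) : ℝ) : ℂ) := by
        rw [Complex.ofReal_exp, Complex.ofReal_exp, ← Complex.exp_add]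
        congr 1
        push_cast
        ring
      rw [e3]
      ring
    calc ∫ l : ℝ, (l:ℂ)^m * g l * (Real.exp (-((s+η)*l)):ℂ)
        = ∫ l : ℝ, ∑' k, F k l := integral_congr_ae (ae_of_all _ fun l => (h1 l).symm)
      _ = ∑' k, ∫ l : ℝ, F k l := h0.symm
      _ = 0 := by simp [hFzero]
  -- bootstrap: all shifted moments vanish for every shift s ≥ 0
  have main : ∀ n : ℕ, ∀ s : ℝ, 0 ≤ s → s ≤ n * (a/4) →
      ∀ m : ℕ, ∫ l : ℝ, (l:ℂ)^m * g l * (Real.exp (-(s*l)):ℂ) = 0 := by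
    intro n
    induction n with
    | zero =>
      intro s hs hs' m
      have hs0 : s = 0 := le_antisymm (by simpa using hs') hs
      subst hs0
      simpa using hmom m
    | succ n ih =>
      intro s hs hs' m
      set s₀ := min s (n * (a/4)) with hs₀
      have hs₀0 : 0 ≤ s₀ := le_min hs (by positivity)
      have hs₀' : s₀ ≤ n * (a/4) := min_le_right _ _
      have hη0 : 0 ≤ s - s₀ := sub_nonneg.2 (min_le_left _ _)
      have hη4 : s - s₀ ≤ a/4 := by
        have h1 : s ≤ (n : ℝ) * (a/4) + a/4 := by
          push_cast at hs'
          linarith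
        have h2 : s - a/4 ≤ s₀ := le_min (by linarith) (by linarith)
        linarith
      have h := step s₀ hs₀0 (ih s₀ hs₀0 hs₀') (s - s₀) hη0 hη4 m
      rwa [show s₀ + (s - s₀) = s by ring] at h
  have laplace : ∀ s : ℝ, 0 ≤ s →
      ∫ l : ℝ, (l:ℂ)^0 * g l * (Real.exp (-(s*l)):ℂ) = 0 := by
    intro s hs
    obtain ⟨n, hn⟩ := exists_nat_ge (s / (a/4))
    have hs' : s ≤ n * (a/4) := by
      rw [div_le_iff₀ (by positivity)] at hn
      linarith
    exact main n s hs hs' 0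
  -- integrability of g itself
  have hg_int : Integrable g volume := by simpa using hInt 0 le_rfl 0
  -- test against smooth compactly supported functions
  have hconc : ∀ᵐ x ∂(volume : Measure ℝ), g x = 0 := by
    apply ae_eq_zero_of_integral_contDiff_smul_eq_zero hg_int.locallyIntegrable
    intro φ hφ hφc
    have hφcont : Continuous φ := hφ.continuous
    -- a bound beyond which φ vanishes
    obtain ⟨M', hM'⟩ := isBounded_iff_forall_norm_le.1 hφc.isBounded
    set M : ℝ := |M'| + 1 with hMdef
    have hM : ∀ x : ℝ, M ≤ |x| → φ x = 0 := by
      intro x hx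
      apply image_eq_zero_of_notMem_tsupport
      intro hmem
      have := hM' x hmem
      rw [Real.norm_eq_abs] at this
      have : |x| ≤ |M'| := le_trans this (le_abs_self M')
      linarith
    have hMpos : 0 < M := by positivity
    set δ : ℝ := Real.exp (-M) with hδdef
    set ψ : ℝ → ℝ := fun t => φ (-Real.log (max t δ)) with hψdef
    have hψcont : Continuous ψ := by
      apply hφcont.comp
      apply Continuous.neg
      refine continuous_iff_continuousAt.2 fun t => ?_
      have hne : max t δ ≠ 0 :=
        ne_of_gt (lt_of_lt_of_le (Real.exp_pos _) (le_max_right _ _))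
      exact ContinuousAt.comp (g := Real.log) (f := fun t : ℝ => max t δ)
        (Real.continuousAt_log hne) ((continuous_id.max continuous_const).continuousAt)
    have hψval : ∀ l : ℝ, 0 ≤ l → ψ (Real.exp (-l)) = φ l := by
      intro l hl
      rcases le_or_gt l M with h | h
      · have hge : δ ≤ Real.exp (-l) := Real.exp_le_exp.2 (by linarith)
        rw [hψdef]
        simp only []
        rw [max_eq_left hge, Real.log_exp, neg_neg]
      · have hle : Real.exp (-l) ≤ δ := Real.exp_le_exp.2 (by linarith)
        rw [hψdef]
        simp only []
        rw [max_eq_right hle, hδdef, Real.log_exp, neg_neg]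
        rw [hM M (by rw [_root_.abs_of_nonneg hMpos.le]), hM l (by rw [_root_.abs_of_nonneg hl]; linarith)]
    have hK : 0 ≤ ∫ x : ℝ, ‖g x‖ := integral_nonneg fun x => norm_nonneg _
    have hmain : ∀ ε : ℝ, 0 < ε → ‖∫ x : ℝ, φ x • g x‖ ≤ ε * ∫ x : ℝ, ‖g x‖ := by
      intro ε hε
      obtain ⟨p, hp⟩ := exists_polynomial_near_of_continuousOn 0 1 ψ
        hψcont.continuousOn ε hε
      have hq_eq : ∀ l : ℝ, ((p.eval (Real.exp (-l)) : ℝ) : ℂ) * g l =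
          ∑ n ∈ Finset.range (p.natDegree + 1),
            (p.coeff n : ℂ) * ((l:ℂ)^0 * g l * (Real.exp (-((n:ℝ)*l)):ℂ)) := by
        intro l
        rw [Polynomial.eval_eq_sum_range]
        push_cast
        rw [Finset.sum_mul]
        refine Finset.sum_congr rfl fun n _ => ?_
        rw [pow_zero, one_mul, ← Complex.exp_nat_mul,
          show ((n:ℂ)) * -(l:ℂ) = -((n:ℂ)*(l:ℂ)) by ring]
        ring
      have hterm_int : ∀ n : ℕ, n ∈ Finset.range (p.natDegree + 1) → Integrable
          (fun l : ℝ => (p.coeff n : ℂ) * ((l:ℂ)^0 * g l * (Real.exp (-((n:ℝ)*l)):ℂ)))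
          volume :=
        fun n _ => (hInt (n:ℝ) (Nat.cast_nonneg n) 0).const_mul _
      have hq_int : Integrable (fun l : ℝ => ((p.eval (Real.exp (-l)) : ℝ) : ℂ) * g l) volume := by
        apply Integrable.congr (integrable_finset_sum _ hterm_int)
        exact ae_of_all _ fun l => (hq_eq l).symm
      have hq_zero : ∫ l : ℝ, ((p.eval (Real.exp (-l)) : ℝ) : ℂ) * g l = 0 := by
        rw [integral_congr_ae (ae_of_all _ hq_eq), integral_finset_sum _ hterm_int]
        refine Finset.sum_eq_zero fun n _ => ?_
        rw [integral_const_mul, laplace (n:ℝ) (Nat.cast_nonneg n), mul_zero]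
      have hφg_int : Integrable (fun l : ℝ => (φ l : ℂ) * g l) volume := by
        obtain ⟨x₀, hx₀⟩ := hφcont.norm.exists_forall_ge_of_hasCompactSupport hφc.norm
        apply hg_int.bdd_mul (c := ‖φ x₀‖)
        · exact (Complex.measurable_ofReal.comp hφcont.measurable).aestronglyMeasurable
        · refine ae_of_all _ fun x => ?_
          simpa [Complex.norm_real] using hx₀ x
      have herr_int : Integrable
          (fun l : ℝ => ((φ l - p.eval (Real.exp (-l)) : ℝ)) • g l) volume := by
        have h2 : (fun l : ℝ => ((φ l - p.eval (Real.exp (-l)) : ℝ)) • g l)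
            = fun l => (φ l : ℂ) * g l - ((p.eval (Real.exp (-l)) : ℝ) : ℂ) * g l := by
          funext l
          rw [sub_smul]
          simp [Complex.real_smul]
        rw [h2]
        exact hφg_int.sub hq_int
      have hsplit : ∫ x : ℝ, φ x • g x =
          (∫ l : ℝ, ((φ l - p.eval (Real.exp (-l)) : ℝ)) • g l) +
          ∫ l : ℝ, ((p.eval (Real.exp (-l)) : ℝ) : ℂ) * g l := by
        rw [← integral_add herr_int hq_int]
        refine integral_congr_ae (ae_of_all _ fun l => ?_)
        simp only [sub_smul, Complex.real_smul, Complex.ofReal_sub]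
        ring
      rw [hsplit, hq_zero, add_zero]
      have hbd : ∀ l : ℝ, ‖((φ l - p.eval (Real.exp (-l)) : ℝ)) • g l‖ ≤ ε * ‖g l‖ := by
        intro l
        rcases lt_or_ge l 0 with hl | hl
        · simp [hg_supp l hl]
        · rw [norm_smul, Real.norm_eq_abs]
          have ht : Real.exp (-l) ∈ Set.Icc (0:ℝ) 1 :=
            ⟨(Real.exp_pos _).le, Real.exp_le_one_iff.2 (by linarith)⟩
          have h1 := hp _ ht
          rw [← hψval l hl]
          rw [abs_sub_comm] at h1
          exact mul_le_mul h1.le le_rfl (norm_nonneg _) hε.le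
      calc ‖∫ l : ℝ, ((φ l - p.eval (Real.exp (-l)) : ℝ)) • g l‖
          ≤ ∫ l : ℝ, ε * ‖g l‖ :=
            norm_integral_le_of_norm_le (hg_int.norm.const_mul ε) (ae_of_all _ hbd)
        _ = ε * ∫ l : ℝ, ‖g l‖ := integral_const_mul _ _
    have h0 : ‖∫ x : ℝ, φ x • g x‖ ≤ 0 := by
      by_contra hcon
      push_neg at hcon
      set X := ‖∫ x : ℝ, φ x • g x‖ with hX
      set K := ∫ x : ℝ, ‖g x‖ with hKdef
      have h1 := hmain (X / (2 * (K + 1))) (by positivity)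
      rw [div_mul_eq_mul_div, le_div_iff₀ (by positivity)] at h1
      nlinarith
    exact norm_le_zero_iff.mp h0
  filter_upwards [hconc] with x hx
  simpa using hx
end

section
/- Let 0 < s < 1, b > 0, C > 0, and let G : (0,∞) → ℝ be a continuous function satisfying |G(t)| ≤ C·t^{−3/2}·e^{−b/t} for all t > 0. If ∫_0^∞ G(t)·t^{−(m+s)} dt = 0 for every integer m ≥ 1, then G(t) = 0 for all t > 0. -/
open MeasureTheory
open scoped FourierTransform

section VanishAux

open Set Complex

lemma integrableOn_pow_mul_exp (n : ℕ) {c : ℝ} (hc : 0 < c) :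
    IntegrableOn (fun x : ℝ => x ^ n * Real.exp (-c * x)) (Set.Ioi 0) := by
  have h := integrableOn_rpow_mul_exp_neg_mul_rpow (s := (n : ℝ)) (p := 1)
    (lt_of_lt_of_le neg_one_lt_zero (Nat.cast_nonneg n)) one_pos hc
  simpa [Real.rpow_one, Real.rpow_natCast] using h

lemma fourier_zero_of_moments_zero {b C : ℝ} (hb : 0 < b) (hC : 0 ≤ C) (W : ℝ → ℂ)
    (hmeas : AEStronglyMeasurable W (volume.restrict (Set.Ioi 0)))
    (hbound : ∀ x : ℝ, 0 < x → ‖W x‖ ≤ C * (1 + x ^ 3) * Real.exp (-b * x))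
    (hmom : ∀ n : ℕ, ∫ x in Set.Ioi (0:ℝ), W x * (x : ℂ) ^ n = 0) :
    ∀ ξ : ℝ, ∫ x in Set.Ioi (0:ℝ), W x * Complex.exp (ξ * x * Complex.I) = 0 := by
  set M : ℕ → ℝ → ℂ := fun n ξ =>
    ∫ x in Set.Ioi (0:ℝ), W x * (x : ℂ) ^ n * Complex.exp (ξ * x * Complex.I) with hM
  -- norm of the exponential is 1
  have hnorme : ∀ (ξ x : ℝ), ‖Complex.exp ((ξ:ℂ) * x * Complex.I)‖ = 1 := by
    intro ξ x
    rw [show ((ξ:ℂ) * x * Complex.I) = ((ξ * x : ℝ) : ℂ) * Complex.I by push_cast; ring]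
    exact Complex.norm_exp_ofReal_mul_I _
  -- norm of the full integrand
  have hnorm : ∀ (n : ℕ) (ξ x : ℝ), 0 < x →
      ‖W x * (x:ℂ) ^ n * Complex.exp ((ξ:ℂ) * x * Complex.I)‖ = ‖W x‖ * x ^ n := by
    intro n ξ x hx
    rw [norm_mul, norm_mul, hnorme, norm_pow, Complex.norm_real, Real.norm_eq_abs,
      abs_of_pos hx, mul_one]
  -- integrability of all integrands
  have hInt : ∀ (n : ℕ) (ξ : ℝ),
      IntegrableOn (fun x => W x * (x:ℂ) ^ n * Complex.exp ((ξ:ℂ) * x * Complex.I))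
        (Set.Ioi 0) := by
    intro n ξ
    have hm : AEStronglyMeasurable
        (fun x : ℝ => W x * (x:ℂ) ^ n * Complex.exp ((ξ:ℂ) * x * Complex.I))
        (volume.restrict (Set.Ioi 0)) := by
      refine (hmeas.mul ?_).mul ?_
      · exact (Complex.continuous_ofReal.pow n).aestronglyMeasurable
      · exact (Complex.continuous_exp.comp (by continuity)).aestronglyMeasurable
    have hg : IntegrableOn (fun x : ℝ =>
        C * (x ^ n * Real.exp (-b * x)) + C * (x ^ (n + 3) * Real.exp (-b * x)))
        (Set.Ioi 0) :=
      ((integrableOn_pow_mul_exp n hb).const_mul C).add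
        ((integrableOn_pow_mul_exp (n + 3) hb).const_mul C)
    refine Integrable.mono' hg hm ?_
    refine (ae_restrict_iff' measurableSet_Ioi).2 (ae_of_all _ fun x hx => ?_)
    have hx0 : (0:ℝ) < x := hx
    rw [hnorm n ξ x hx0]
    have h1 : ‖W x‖ * x ^ n ≤ (C * (1 + x ^ 3) * Real.exp (-b * x)) * x ^ n :=
      mul_le_mul_of_nonneg_right (hbound x hx0) (by positivity)
    calc ‖W x‖ * x ^ n ≤ (C * (1 + x ^ 3) * Real.exp (-b * x)) * x ^ n := h1
      _ = C * (x ^ n * Real.exp (-b * x)) + C * (x ^ (n + 3) * Real.exp (-b * x)) := by ring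
  -- translation step
  have hstep : ∀ ξ : ℝ, (∀ k : ℕ, M k ξ = 0) → ∀ h : ℝ, |h| ≤ b / 2 → ∀ n : ℕ,
      M n (ξ + h) = 0 := by
    intro ξ hξ h hh n
    rw [hM]
    simp only
    rw [show (((ξ + h :ℝ)):ℂ) = (((ξ:ℝ) + (h:ℝ) :ℝ):ℂ) from rfl]
    simp only [hM] at hξ
    set F : ℕ → ℝ → ℂ := fun k x =>
      (W x * (x:ℂ) ^ (n + k) * Complex.exp ((ξ:ℂ) * x * Complex.I)) *
        (((h:ℂ) * Complex.I) ^ k / (k.factorial : ℂ)) with hF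
    have hFnorm : ∀ (k : ℕ) (x : ℝ), 0 < x →
        ‖F k x‖ = (‖W x‖ * x ^ n) * ((|h| * x) ^ k / k.factorial) := by
      intro k x hx
      have : F k x = (W x * (x:ℂ) ^ (n + k) * Complex.exp ((ξ:ℂ) * x * Complex.I)) *
          (((h:ℂ) * Complex.I) ^ k / (k.factorial : ℂ)) := rfl
      rw [this, norm_mul, hnorm (n+k) ξ x hx, norm_div, norm_pow, norm_mul, Complex.norm_I,
        Complex.norm_real, Real.norm_eq_abs, mul_one, Complex.norm_natCast,
        pow_add, mul_pow]
      ring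
    -- integrability of each F k
    have hFint : ∀ k : ℕ, IntegrableOn (F k) (Set.Ioi 0) := fun k =>
      (hInt (n + k) ξ).mul_const _
    -- the integral of each F k vanishes
    have hFzero : ∀ k : ℕ, ∫ x in Set.Ioi (0:ℝ), F k x = 0 := by
      intro k
      rw [hF]
      simp only
      rw [integral_mul_const, hξ (n + k), zero_mul]
    -- summability of integrals of norms
    have hb2 : (0:ℝ) < b / 2 := by linarith
    have hgint : IntegrableOn (fun x : ℝ =>
        C * (x ^ n * Real.exp (-(b/2) * x)) + C * (x ^ (n+3) * Real.exp (-(b/2) * x)))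
        (Set.Ioi 0) :=
      ((integrableOn_pow_mul_exp n hb2).const_mul C).add
        ((integrableOn_pow_mul_exp (n+3) hb2).const_mul C)
    have hCnn : 0 ≤ C := by
      have h1 := hbound 1 one_pos
      nlinarith [norm_nonneg (W 1), Real.exp_pos (-b * 1)]
    have hsum : Summable fun k : ℕ => ∫ x in Set.Ioi (0:ℝ), ‖F k x‖ := by
      apply summable_of_sum_range_le
        (c := ∫ x in Set.Ioi (0:ℝ),
          (C * (x ^ n * Real.exp (-(b/2) * x)) + C * (x ^ (n+3) * Real.exp (-(b/2) * x))))
        (fun k => integral_nonneg fun x => norm_nonneg _)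
      intro K
      rw [← integral_finset_sum _ (fun k _ => (hFint k).norm)]
      apply setIntegral_mono_on (integrable_finset_sum _ (fun k _ => (hFint k).norm)) hgint
        measurableSet_Ioi
      intro x hx
      have hx0 : (0:ℝ) < x := hx
      have hexp2 : Real.exp (-b * x) * Real.exp (b/2 * x) = Real.exp (-(b/2) * x) := by
        rw [← Real.exp_add]; congr 1; ring
      calc ∑ k ∈ Finset.range K, ‖F k x‖
          = (‖W x‖ * x ^ n) * ∑ k ∈ Finset.range K, (|h| * x) ^ k / k.factorial := by
            rw [Finset.mul_sum]; exact Finset.sum_congr rfl fun k _ => by rw [hFnorm k x hx0]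
        _ ≤ (‖W x‖ * x ^ n) * Real.exp (|h| * x) :=
            mul_le_mul_of_nonneg_left (Real.sum_le_exp_of_nonneg (by positivity) K)
              (by positivity)
        _ ≤ (C * (1 + x ^ 3) * Real.exp (-b * x) * x ^ n) * Real.exp (b/2 * x) := by
            apply mul_le_mul (mul_le_mul_of_nonneg_right (hbound x hx0) (by positivity))
              (Real.exp_le_exp.2 (by nlinarith [abs_nonneg h])) (Real.exp_nonneg _)
              (by positivity)
        _ = C * (x ^ n * Real.exp (-(b/2) * x)) + C * (x ^ (n+3) * Real.exp (-(b/2) * x)) := by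
            rw [← hexp2]; ring
    have hHasSum := hasSum_integral_of_summable_integral_norm hFint hsum
    have hexp_tsum : ∀ z : ℂ, ∑' k : ℕ, z ^ k / (k.factorial : ℂ) = Complex.exp z := by
      intro z
      rw [Complex.exp_eq_exp_ℂ, NormedSpace.exp_eq_tsum_div]
    have htsum : ∀ x : ℝ, ∑' k, F k x
        = W x * (x:ℂ) ^ n * Complex.exp (((ξ + h :ℝ):ℂ) * x * Complex.I) := by
      intro x
      have h1 : ∀ k : ℕ, F k x = (W x * (x:ℂ) ^ n * Complex.exp ((ξ:ℂ) * x * Complex.I)) *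
          (((h:ℂ) * x * Complex.I) ^ k / (k.factorial : ℂ)) := by
        intro k
        have : ((h:ℂ) * x * Complex.I) ^ k = ((h:ℂ) * Complex.I) ^ k * (x:ℂ) ^ k := by
          rw [← mul_pow]; ring_nf
        rw [hF]; simp only; rw [this, pow_add]; ring
      calc ∑' k, F k x
          = ∑' k, (W x * (x:ℂ) ^ n * Complex.exp ((ξ:ℂ) * x * Complex.I)) *
              (((h:ℂ) * x * Complex.I) ^ k / (k.factorial : ℂ)) := tsum_congr h1
        _ = (W x * (x:ℂ) ^ n * Complex.exp ((ξ:ℂ) * x * Complex.I)) *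
              ∑' k, (((h:ℂ) * x * Complex.I) ^ k / (k.factorial : ℂ)) := tsum_mul_left
        _ = (W x * (x:ℂ) ^ n * Complex.exp ((ξ:ℂ) * x * Complex.I)) *
              Complex.exp ((h:ℂ) * x * Complex.I) := by rw [hexp_tsum]
        _ = W x * (x:ℂ) ^ n * Complex.exp (((ξ + h :ℝ):ℂ) * x * Complex.I) := by
            rw [mul_assoc, ← Complex.exp_add]
            congr 2
            push_cast; ring
    have hzero : HasSum (fun _ : ℕ => (0:ℂ)) (∫ x in Set.Ioi (0:ℝ), ∑' k, F k x) := by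
      rw [show (fun _ : ℕ => (0:ℂ)) = fun k => ∫ x in Set.Ioi (0:ℝ), F k x from
        funext fun k => (hFzero k).symm]
      exact hHasSum
    have h0 : ∫ x in Set.Ioi (0:ℝ), ∑' k, F k x = 0 := hzero.unique hasSum_zero
    rw [← h0]
    exact setIntegral_congr_fun measurableSet_Ioi fun x _ => (htsum x).symm
  -- propagation from 0
  have hb2 : (0:ℝ) < b / 2 := by linarith
  have hzero0 : ∀ n : ℕ, M n 0 = 0 := by
    intro n
    rw [hM]
    simpa using hmom n
  have hall : ∀ j : ℕ, ∀ ξ : ℝ, |ξ| ≤ j * (b/2) → ∀ n : ℕ, M n ξ = 0 := by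
    intro j
    induction j with
    | zero =>
      intro ξ hξ n
      simp only [Nat.cast_zero, zero_mul] at hξ
      have : ξ = 0 := abs_nonpos_iff.mp hξ
      rw [this]; exact hzero0 n
    | succ j ih =>
      intro ξ hξ n
      push_cast at hξ
      have hj1 : (0:ℝ) < (j:ℝ) + 1 := by positivity
      have hjnn : (0:ℝ) ≤ (j:ℝ) := Nat.cast_nonneg j
      have h1 : |ξ / ((j:ℝ) + 1)| ≤ b / 2 := by
        rw [abs_div, abs_of_pos hj1, div_le_iff₀ hj1]
        nlinarith [abs_nonneg ξ]
      have h2 : |ξ * (j:ℝ) / ((j:ℝ) + 1)| ≤ (j:ℝ) * (b/2) := by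
        rw [abs_div, abs_mul, abs_of_pos hj1, Nat.abs_cast, div_le_iff₀ hj1]
        nlinarith [abs_nonneg ξ]
      have hres := hstep (ξ * (j:ℝ) / ((j:ℝ) + 1)) (ih _ h2) (ξ / ((j:ℝ) + 1)) h1 n
      rw [show ξ * (j:ℝ) / ((j:ℝ) + 1) + ξ / ((j:ℝ) + 1) = ξ from by field_simp] at hres
      exact hres
  intro ξ
  obtain ⟨j, hj⟩ := exists_nat_ge (|ξ| / (b/2))
  have hξ : |ξ| ≤ j * (b/2) := by
    rw [div_le_iff₀ hb2] at hj
    linarith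
  have := hall j ξ hξ 0
  rw [hM] at this
  simpa using this

end VanishAux

/-- If a continuous function `G` on `(0,∞)` satisfies the Gaussian-in-`1/t` bound
`|G(t)| ≤ C t^{-3/2} e^{-b/t}` and all the weighted integrals
`∫_0^∞ G(t) t^{-(m+s)} dt` vanish for integers `m ≥ 1`, then `G ≡ 0` on `(0,∞)`. -/
theorem vanish_of_weighted_moments_vanish
    (s b C : ℝ) (hs0 : 0 < s) (hs1 : s < 1) (hb : 0 < b) (hC : 0 < C)
    (G : ℝ → ℝ) (hG_cont : ContinuousOn G (Set.Ioi 0))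
    (hG_bound : ∀ t : ℝ, 0 < t → |G t| ≤ C * t ^ (-(3 / 2) : ℝ) * Real.exp (-b / t))
    (hmom : ∀ m : ℕ, 1 ≤ m → ∫ t in Set.Ioi (0 : ℝ), G t * t ^ (-((m : ℝ) + s)) = 0) :
    ∀ t : ℝ, 0 < t → G t = 0 := by
  set g : ℝ → ℂ := fun x => ((x ^ s * G x⁻¹ : ℝ) : ℂ) with hg
  set W : ℝ → ℂ := (Set.Ioi (0:ℝ)).indicator g with hW
  have hginv : ∀ x : ℝ, x ∈ Set.Ioi (0:ℝ) → W x = g x := fun x hx => Set.indicator_of_mem hx g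
  have hgcont : ContinuousOn g (Set.Ioi 0) := by
    apply Complex.continuous_ofReal.comp_continuousOn
    apply ContinuousOn.mul
    · exact fun x hx =>
        (Real.continuousAt_rpow_const x s (Or.inl (ne_of_gt hx))).continuousWithinAt
    · exact hG_cont.comp (continuousOn_inv₀.mono fun x hx =>
        Set.mem_compl_singleton_iff.mpr (ne_of_gt hx))
        (fun x hx => Set.mem_Ioi.2 (inv_pos.2 hx))
  have hWmeas : AEStronglyMeasurable W volume := by
    rw [hW, aestronglyMeasurable_indicator_iff measurableSet_Ioi]
    exact hgcont.aestronglyMeasurable measurableSet_Ioi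
  have hWbound : ∀ x : ℝ, 0 < x → ‖W x‖ ≤ C * (1 + x ^ 3) * Real.exp (-b * x) := by
    intro x hx
    rw [hginv x hx, hg]
    simp only
    rw [Complex.norm_real, Real.norm_eq_abs, abs_mul, abs_of_pos (Real.rpow_pos_of_pos hx s)]
    have hGb := hG_bound x⁻¹ (inv_pos.2 hx)
    have e1 : (x⁻¹ : ℝ) ^ (-(3/2) : ℝ) = x ^ ((3:ℝ)/2) := by
      rw [Real.inv_rpow hx.le, ← Real.rpow_neg hx.le, neg_neg]
    have e2 : -b / x⁻¹ = -b * x := by field_simp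
    rw [e1, e2] at hGb
    have h3 : x ^ s * |G x⁻¹| ≤ x ^ s * (C * x ^ ((3:ℝ)/2) * Real.exp (-b * x)) :=
      mul_le_mul_of_nonneg_left hGb (Real.rpow_nonneg hx.le s)
    have h4 : x ^ s * (C * x ^ ((3:ℝ)/2) * Real.exp (-b*x))
        = C * x ^ (s + (3:ℝ)/2) * Real.exp (-b*x) := by
      rw [Real.rpow_add hx]; ring
    have h5 : x ^ (s + (3:ℝ)/2) ≤ 1 + x ^ 3 := by
      rcases le_total x 1 with hx1 | hx1
      · have h8 : (0:ℝ) ≤ s + (3:ℝ)/2 := by linarith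
        have := Real.rpow_le_one hx.le hx1 h8
        nlinarith [pow_nonneg hx.le 3]
      · have h6 : x ^ (s + (3:ℝ)/2) ≤ x ^ (3:ℝ) :=
          Real.rpow_le_rpow_of_exponent_le hx1 (by linarith)
        have h7 : x ^ (3:ℝ) = x ^ (3:ℕ) := by
          rw [← Real.rpow_natCast x 3]; norm_num
        rw [h7] at h6
        linarith
    calc x ^ s * |G x⁻¹| ≤ C * x ^ (s + (3:ℝ)/2) * Real.exp (-b*x) := by rw [← h4]; exact h3
      _ ≤ C * (1 + x^3) * Real.exp (-b*x) :=
          mul_le_mul_of_nonneg_right (mul_le_mul_of_nonneg_left h5 hC.le) (Real.exp_nonneg _)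
  have hWmom : ∀ n : ℕ, ∫ x in Set.Ioi (0:ℝ), W x * (x:ℂ) ^ n = 0 := by
    intro n
    have hreal : ∫ x in Set.Ioi (0:ℝ), (x ^ s * G x⁻¹) * x ^ n = 0 := by
      have key := MeasureTheory.integral_comp_rpow_Ioi
        (fun t : ℝ => G t * t ^ (-(((n+2 : ℕ) : ℝ) + s))) (p := -1) (by norm_num)
      rw [show (∫ y in Set.Ioi (0:ℝ), (fun t : ℝ => G t * t ^ (-(((n+2 : ℕ) : ℝ) + s))) y)
          = ∫ t in Set.Ioi (0:ℝ), G t * t ^ (-(((n+2 : ℕ) : ℝ) + s)) from rfl,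
        hmom (n+2) (by omega)] at key
      have hpt : ∀ x ∈ Set.Ioi (0:ℝ),
          (|(-1:ℝ)| * x ^ ((-1:ℝ) - 1)) •
            (fun t : ℝ => G t * t ^ (-(((n+2 : ℕ) : ℝ) + s))) (x ^ (-1:ℝ))
          = (x ^ s * G x⁻¹) * x ^ n := by
        intro x hx
        have hx0 : (0:ℝ) < x := hx
        simp only [smul_eq_mul]
        rw [Real.rpow_neg_one x]
        rw [Real.inv_rpow hx0.le, ← Real.rpow_neg hx0.le, neg_neg]
        rw [show |(-1:ℝ)| = 1 by norm_num, one_mul,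
          show ((-1:ℝ) - 1) = (-2:ℝ) by norm_num]
        rw [show x ^ s * G x⁻¹ * x ^ n = G x⁻¹ * (x ^ s * x ^ (n:ℝ)) from by
          rw [Real.rpow_natCast]; ring]
        rw [← Real.rpow_add hx0]
        rw [mul_comm (x ^ (-2:ℝ)), mul_assoc, ← Real.rpow_add hx0]
        push_cast
        ring_nf
      calc ∫ x in Set.Ioi (0:ℝ), (x ^ s * G x⁻¹) * x ^ n
          = ∫ x in Set.Ioi (0:ℝ), (|(-1:ℝ)| * x ^ ((-1:ℝ) - 1)) •
              (fun t : ℝ => G t * t ^ (-(((n+2 : ℕ) : ℝ) + s))) (x ^ (-1:ℝ)) :=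
            setIntegral_congr_fun measurableSet_Ioi (fun x hx => (hpt x hx).symm)
        _ = 0 := key
    calc ∫ x in Set.Ioi (0:ℝ), W x * (x:ℂ)^n
        = ∫ x in Set.Ioi (0:ℝ), (((x ^ s * G x⁻¹) * x ^ n : ℝ) : ℂ) := by
          apply setIntegral_congr_fun measurableSet_Ioi
          intro x hx
          show W x * (x:ℂ)^n = (((x ^ s * G x⁻¹) * x ^ n : ℝ) : ℂ)
          rw [hginv x hx, hg]; push_cast; ring
      _ = ((∫ x in Set.Ioi (0:ℝ), (x ^ s * G x⁻¹) * x ^ n : ℝ) : ℂ) := integral_ofReal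
      _ = 0 := by rw [hreal]; norm_num
  have hFz : ∀ ξ : ℝ, ∫ x in Set.Ioi (0:ℝ), W x * Complex.exp (ξ * x * Complex.I) = 0 :=
    fourier_zero_of_moments_zero hb hC.le W hWmeas.restrict hWbound hWmom
  -- W is integrable on ℝ
  have hgi : IntegrableOn (fun x : ℝ =>
      C * (x ^ 0 * Real.exp (-b*x)) + C * (x ^ 3 * Real.exp (-b*x))) (Set.Ioi 0) :=
    ((integrableOn_pow_mul_exp 0 hb).const_mul C).add
      ((integrableOn_pow_mul_exp 3 hb).const_mul C)
  have hWint : Integrable W := by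
    rw [hW, integrable_indicator_iff measurableSet_Ioi]
    apply Integrable.mono' hgi (hgcont.aestronglyMeasurable measurableSet_Ioi)
    refine (ae_restrict_iff' measurableSet_Ioi).2 (ae_of_all _ fun x hx => ?_)
    have hx0 : (0:ℝ) < x := hx
    calc ‖g x‖ = ‖W x‖ := by rw [hginv x hx]
      _ ≤ C * (1 + x ^ 3) * Real.exp (-b * x) := hWbound x hx0
      _ = C * (x ^ 0 * Real.exp (-b*x)) + C * (x ^ 3 * Real.exp (-b*x)) := by ring
  -- Fourier transform of W vanishes
  have hFW : 𝓕 W = 0 := by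
    funext w
    rw [Real.fourier_real_eq_integral_exp_smul]
    have hpt : ∀ x : ℝ, Complex.exp (↑(-2 * Real.pi * x * w) * Complex.I) • W x
        = (Set.Ioi (0:ℝ)).indicator
            (fun x => W x * Complex.exp ((((-2) * Real.pi * w : ℝ):ℂ) * x * Complex.I)) x := by
      intro x
      by_cases hx : x ∈ Set.Ioi (0:ℝ)
      · rw [Set.indicator_of_mem hx, smul_eq_mul, mul_comm]
        congr 2
        push_cast; ring
      · rw [Set.indicator_of_notMem hx, hW, Set.indicator_of_notMem hx, smul_zero]
    rw [integral_congr_ae (ae_of_all _ hpt), integral_indicator measurableSet_Ioi]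
    have := hFz ((-2) * Real.pi * w)
    rw [this]
    simp
  -- Fourier inversion gives W = 0 on (0,∞)
  have hWzero : ∀ v : ℝ, 0 < v → W v = 0 := by
    intro v hv
    have hcont : ContinuousAt W v := by
      have hca : ContinuousAt g v := hgcont.continuousAt (Ioi_mem_nhds hv)
      apply hca.congr
      filter_upwards [Ioi_mem_nhds hv] with x hx
      exact (hginv x hx).symm
    have hinv := hWint.fourierInv_fourier_eq (by rw [hFW]; exact integrable_zero _ _ _) hcont
    rw [hFW] at hinv
    rw [← hinv]
    rw [Real.fourierInv_eq]
    simp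
  intro t ht
  have hv : (0:ℝ) < t⁻¹ := inv_pos.2 ht
  have h0 := hWzero t⁻¹ hv
  rw [hginv _ hv, hg] at h0
  simp only at h0
  rw [Complex.ofReal_eq_zero] at h0
  have hne : (t⁻¹ : ℝ) ^ s ≠ 0 := (Real.rpow_pos_of_pos hv s).ne'
  have h1 : G (t⁻¹)⁻¹ = 0 := by
    rcases mul_eq_zero.mp h0 with h | h
    · exact absurd h hne
    · exact h
  rwa [inv_inv] at h1
end

section
/- Let l be a positive integer, 0 < s < 1, μ > 0, and T > 0. Let λ : Fin l → ℝ satisfy λ_k ≥ μ for every k. Let F : ℝ → EuclideanSpace ℝ (Fin l) be continuous and let c : ℝ → EuclideanSpace ℝ (Fin l) be twice continuously differentiable with c(0) = 0 and c'(0) = 0, such that for every k and every t ∈ [0,T], c_k''(t) + λ_k·c_k(t) + λ_k^s·c_k'(t) = F_k(t). Then for every t ∈ [0,T]: ∑_k (c_k'(t))² + ∑_k λ_k·(c_k(t))² + ∫_0^t ∑_k λ_k^s·(c_k'(τ))² dτ ≤ (4/μ^s)·∫_0^t ‖F(τ)‖² dτ. -/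
open MeasureTheory

/-- Galerkin energy estimate for the damped oscillator system
`c_k'' + λ_k c_k + λ_k^s c_k' = F_k` with zero initial data, where `λ_k ≥ μ > 0`:
`∑ (c_k')² + ∑ λ_k c_k² + ∫_0^t ∑ λ_k^s (c_k')² ≤ (4/μ^s) ∫_0^t ‖F‖²`. -/
theorem galerkin_energy_estimate
    (l : ℕ) (hl : 0 < l) (s μ T : ℝ) (hs0 : 0 < s) (hs1 : s < 1)
    (hμ : 0 < μ) (hT : 0 < T)
    (lam : Fin l → ℝ) (hlam : ∀ k, μ ≤ lam k)
    (F : ℝ → EuclideanSpace ℝ (Fin l)) (hF : Continuous F)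
    (c c' c'' : ℝ → EuclideanSpace ℝ (Fin l))
    (hc1 : ∀ t : ℝ, HasDerivAt c (c' t) t)
    (hc2 : ∀ t : ℝ, HasDerivAt c' (c'' t) t)
    (hc2cont : Continuous c'')
    (hc0 : c 0 = 0) (hc'0 : c' 0 = 0)
    (hode : ∀ k : Fin l, ∀ t ∈ Set.Icc (0 : ℝ) T,
      c'' t k + lam k * c t k + (lam k) ^ s * c' t k = F t k) :
    ∀ t ∈ Set.Icc (0 : ℝ) T,
      (∑ k : Fin l, (c' t k) ^ 2) + (∑ k : Fin l, lam k * (c t k) ^ 2)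
        + ∫ τ in (0 : ℝ)..t, ∑ k : Fin l, (lam k) ^ s * (c' τ k) ^ 2
      ≤ (4 / μ ^ s) * ∫ τ in (0 : ℝ)..t, ‖F τ‖ ^ 2 := by
  classical
  have hμs : (0:ℝ) < μ ^ s := Real.rpow_pos_of_pos hμ s
  -- component derivatives
  have hck : ∀ (k : Fin l) (t : ℝ), HasDerivAt (fun τ => c τ k) (c' t k) t := fun k t =>
    ((EuclideanSpace.proj k : EuclideanSpace ℝ (Fin l) →L[ℝ] ℝ).hasFDerivAt.comp_hasDerivAt
      t (hc1 t) : HasDerivAt ((EuclideanSpace.proj k : EuclideanSpace ℝ (Fin l) →L[ℝ] ℝ) ∘ c) _ t)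
  have hc'k : ∀ (k : Fin l) (t : ℝ), HasDerivAt (fun τ => c' τ k) (c'' t k) t := fun k t =>
    ((EuclideanSpace.proj k : EuclideanSpace ℝ (Fin l) →L[ℝ] ℝ).hasFDerivAt.comp_hasDerivAt
      t (hc2 t) : HasDerivAt ((EuclideanSpace.proj k : EuclideanSpace ℝ (Fin l) →L[ℝ] ℝ) ∘ c') _ t)
  have hc'cont : Continuous c' := continuous_iff_continuousAt.2 fun t => (hc2 t).continuousAt
  have hc'kcont : ∀ k : Fin l, Continuous fun τ => c' τ k := fun k =>
    (EuclideanSpace.proj k).continuous.comp hc'cont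
  set g : ℝ → ℝ := fun u => ∑ k, ((c' u k)^2 + lam k * (c u k)^2) with hgdef
  set g' : ℝ → ℝ := fun u => ∑ k, (2 * c' u k * c'' u k + 2 * lam k * c u k * c' u k) with hg'def
  have hg : ∀ u, HasDerivAt g (g' u) u := by
    intro u
    apply HasDerivAt.fun_sum
    intro k _
    have h1 := (hc'k k u).fun_pow 2
    have h2 := ((hck k u).fun_pow 2).const_mul (lam k)
    convert h1.fun_add h2 using 1
    ring
  set P : ℝ → ℝ := fun τ => ∑ k, (lam k)^s * (c' τ k)^2 with hPdef
  set Q : ℝ → ℝ := fun τ => ‖F τ‖^2 with hQdef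
  have hPcont : Continuous P := by
    apply continuous_finset_sum
    intro k _
    exact continuous_const.mul ((hc'kcont k).pow 2)
  have hQcont : Continuous Q := hF.norm.pow 2
  have hI : ∀ u : ℝ, HasDerivAt (fun v => ∫ τ in (0:ℝ)..v, P τ) (P u) u := fun u =>
    intervalIntegral.integral_hasDerivAt_right (hPcont.intervalIntegrable 0 u)
      (hPcont.stronglyMeasurableAtFilter _ _) hPcont.continuousAt
  have hJ : ∀ u : ℝ, HasDerivAt (fun v => ∫ τ in (0:ℝ)..v, Q τ) (Q u) u := fun u =>
    intervalIntegral.integral_hasDerivAt_right (hQcont.intervalIntegrable 0 u)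
      (hQcont.stronglyMeasurableAtFilter _ _) hQcont.continuousAt
  set h : ℝ → ℝ := fun u =>
    g u + (∫ τ in (0:ℝ)..u, P τ) - (2/μ^s) * ∫ τ in (0:ℝ)..u, Q τ with hhdef
  have hh : ∀ u, HasDerivAt h (g' u + P u - (2/μ^s) * Q u) u := fun u =>
    ((hg u).add (hI u)).sub ((hJ u).const_mul _)
  -- norm squared as sum of squares
  have hnorm : ∀ x : EuclideanSpace ℝ (Fin l), ‖x‖^2 = ∑ k, (x k)^2 := by
    intro x
    rw [EuclideanSpace.norm_eq, Real.sq_sqrt]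
    · simp [sq_abs]
    · positivity
  -- key derivative bound
  have key : ∀ u ∈ Set.Icc (0:ℝ) T, g' u + P u - (2/μ^s) * Q u ≤ 0 := by
    intro u hu
    have hg'eq : g' u = (∑ k, 2 * c' u k * F u k) - 2 * P u := by
      rw [hg'def, hPdef]
      simp only
      rw [Finset.mul_sum, ← Finset.sum_sub_distrib]
      apply Finset.sum_congr rfl
      intro k _
      linear_combination (2 * c' u k) * (hode k u hu)
    rw [hg'eq, hQdef]
    simp only
    rw [hnorm (F u)]
    have hsum : ∑ k, 2 * c' u k * F u k ≤ P u + (1/μ^s) * ∑ k, (F u k)^2 := by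
      rw [hPdef, Finset.mul_sum, ← Finset.sum_add_distrib]
      apply Finset.sum_le_sum
      intro k _
      have hlk : μ^s ≤ (lam k)^s :=
        Real.rpow_le_rpow hμ.le (hlam k) hs0.le
      have hy : 2 * c' u k * F u k ≤ μ^s * (c' u k)^2 + (1/μ^s) * (F u k)^2 := by
        have hsq := sq_nonneg (μ^s * c' u k - F u k)
        have hfs : (1/μ^s) * (F u k)^2 * μ^s = (F u k)^2 := by field_simp
        nlinarith [hsq, hfs, mul_pos hμs hμs, sq_nonneg (F u k), sq_nonneg (c' u k)]
      nlinarith [sq_nonneg (c' u k)]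
    have hQn : (0:ℝ) ≤ ∑ k, (F u k)^2 := Finset.sum_nonneg fun k _ => sq_nonneg _
    have h12 : (1/μ^s) * ∑ k, (F u k)^2 ≤ (2/μ^s) * ∑ k, (F u k)^2 := by
      apply mul_le_mul_of_nonneg_right _ hQn
      rw [div_le_div_iff₀ hμs hμs]; nlinarith
    linarith
  have hanti : AntitoneOn h (Set.Icc 0 T) := by
    apply antitoneOn_of_deriv_nonpos (convex_Icc 0 T)
      (fun u _ => (hh u).continuousAt.continuousWithinAt)
      (fun u hu => ((hh u).differentiableAt).differentiableWithinAt)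
    intro u hu
    rw [(hh u).deriv]
    exact key u (interior_subset hu)
  have hh0 : h 0 = 0 := by
    simp [hhdef, hgdef, intervalIntegral.integral_same, hc0, hc'0]
  intro t ht
  have h0mem : (0:ℝ) ∈ Set.Icc (0:ℝ) T := ⟨le_refl 0, hT.le⟩
  have hht : h t ≤ 0 := hh0 ▸ hanti h0mem ht ht.1
  have hQint : (0:ℝ) ≤ ∫ τ in (0:ℝ)..t, Q τ := by
    apply intervalIntegral.integral_nonneg ht.1
    intro τ _
    exact sq_nonneg _
  have hgt : g t = (∑ k : Fin l, (c' t k) ^ 2) + (∑ k : Fin l, lam k * (c t k) ^ 2) := by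
    rw [hgdef]; simp [Finset.sum_add_distrib]
  have h24 : (2/μ^s) * (∫ τ in (0:ℝ)..t, Q τ) ≤ (4/μ^s) * ∫ τ in (0:ℝ)..t, Q τ := by
    apply mul_le_mul_of_nonneg_right _ hQint
    rw [div_le_div_iff₀ hμs hμs]; nlinarith
  have : g t + (∫ τ in (0:ℝ)..t, P τ) ≤ (2/μ^s) * ∫ τ in (0:ℝ)..t, Q τ := by
    rw [hhdef] at hht; simp only at hht; linarith
  rw [← hgt]
  calc g t + ∫ τ in (0:ℝ)..t, P τ ≤ (2/μ^s) * ∫ τ in (0:ℝ)..t, Q τ := this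
    _ ≤ (4/μ^s) * ∫ τ in (0:ℝ)..t, Q τ := h24
end
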